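/- Let (a_α) be a quasi-central bounded net in a Banach algebra A, with associated net ideals I(a_α) = {a : a a_α → a}, K(a_α) = {a : a a_α → 0}, C(a_α) = {a : (a a_α) converges}, L(a_α) = {lim a a_α : a ∈ C(a_α)}. Assume L(a_α) = I(a_α), so that C(a_α) = I(a_α) ⊕ K(a_α). If every continuous derivation A → C(a_α)* is inner, then every continuous derivation A → I(a_α)* is inner and every continuous derivation A → K(a_α)* is inner. -/

import Mathlib

open ContinuousLinearMap Filter Topology

namespace Paper

structure Bimod (A : Type*) [NormedRing A] [NormedAlgebra ℂ A]
    (X : Type*) [NormedAddCommGroup X] [NormedSpace ℂ X] where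
  l : A → X →L[ℂ] X
  r : A → X →L[ℂ] X
  l_mul : ∀ a b x, l (a * b) x = l a (l b x)
  r_mul : ∀ a b x, r (a * b) x = r b (r a x)
  lr : ∀ a b x, l a (r b x) = r b (l a x)

variable {A : Type*} [NormedRing A] [NormedAlgebra ℂ A]
variable {X : Type*} [NormedAddCommGroup X] [NormedSpace ℂ X]

noncomputable def Bimod.dual (M : Bimod A X) : Bimod A (X →L[ℂ] ℂ) where
  l a := (compL ℂ X X ℂ).flip (M.r a)
  r a := (compL ℂ X X ℂ).flip (M.l a)
  l_mul a b f := by ext x; simp [M.r_mul]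
  r_mul a b f := by ext x; simp [M.l_mul]
  lr a b f := by ext x; simp [M.lr]

def IsDerivation (M : Bimod A X) (D : A →L[ℂ] X) : Prop :=
  ∀ a b, D (a * b) = M.l a (D b) + M.r b (D a)

def IsInner (M : Bimod A X) (D : A →L[ℂ] X) : Prop :=
  ∃ x, ∀ a, D a = M.l a x - M.r a x

noncomputable def Bimod.restrict (M : Bimod A X) (Y : Submodule ℂ X)
    (hl : ∀ a, ∀ y ∈ Y, M.l a y ∈ Y) (hr : ∀ a, ∀ y ∈ Y, M.r a y ∈ Y) :
    Bimod A Y where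
  l a := ((M.l a).comp Y.subtypeL).codRestrict Y fun y => hl a y y.2
  r a := ((M.r a).comp Y.subtypeL).codRestrict Y fun y => hr a y y.2
  l_mul a b y := Subtype.ext (M.l_mul a b y)
  r_mul a b y := Subtype.ext (M.r_mul a b y)
  lr a b y := Subtype.ext (M.lr a b y)

noncomputable def algBimod (A : Type*) [NormedRing A] [NormedAlgebra ℂ A] : Bimod A A where
  l a := ContinuousLinearMap.mul ℂ A a
  r a := (ContinuousLinearMap.mul ℂ A).flip a
  l_mul a b x := mul_assoc a b x
  r_mul a b x := (mul_assoc x a b).symm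
  lr a b x := (mul_assoc a x b).symm

noncomputable def idealBimod (I : Submodule ℂ A)
    (hL : ∀ a, ∀ x ∈ I, a * x ∈ I) (hR : ∀ a, ∀ x ∈ I, x * a ∈ I) :
    Bimod A I where
  l a := ((ContinuousLinearMap.mul ℂ A a).comp I.subtypeL).codRestrict I fun x => hL a x x.2
  r a := (((ContinuousLinearMap.mul ℂ A).flip a).comp I.subtypeL).codRestrict I fun x => hR a x x.2
  l_mul a b x := Subtype.ext (mul_assoc a b (x : A))
  r_mul a b x := Subtype.ext (mul_assoc (x : A) a b).symm
  lr a b x := Subtype.ext (mul_assoc a (x : A) b).symm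

theorem transfer_inner {A : Type*} [NormedRing A] [NormedAlgebra ℂ A]
    (Cid J : Submodule ℂ A)
    (hCL : ∀ a : A, ∀ x ∈ Cid, a * x ∈ Cid) (hCR : ∀ a : A, ∀ x ∈ Cid, x * a ∈ Cid)
    (hJL : ∀ a : A, ∀ x ∈ J, a * x ∈ J) (hJR : ∀ a : A, ∀ x ∈ J, x * a ∈ J)
    (hsub : ∀ x ∈ J, x ∈ Cid)
    (P : ↥Cid →L[ℂ] ↥J)
    (hPl : ∀ (a : A) (x : ↥Cid) (hm : a * (x : A) ∈ Cid),
      ((P ⟨a * (x : A), hm⟩ : ↥J) : A) = a * ((P x : ↥J) : A))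
    (hPr : ∀ (a : A) (x : ↥Cid) (hm : (x : A) * a ∈ Cid),
      ((P ⟨(x : A) * a, hm⟩ : ↥J) : A) = ((P x : ↥J) : A) * a)
    (hPid : ∀ (y : ↥J), P ⟨(y : A), hsub y y.2⟩ = y)
    (hC : ∀ D : A →L[ℂ] (↥Cid →L[ℂ] ℂ),
        IsDerivation (idealBimod Cid hCL hCR).dual D → IsInner (idealBimod Cid hCL hCR).dual D) :
    ∀ D : A →L[ℂ] (↥J →L[ℂ] ℂ),
        IsDerivation (idealBimod J hJL hJR).dual D → IsInner (idealBimod J hJL hJR).dual D := by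
  intro D hD
  set ι : ↥J →L[ℂ] ↥Cid := (J.subtypeL).codRestrict Cid (fun y => hsub y y.2) with hι
  set D' : A →L[ℂ] (↥Cid →L[ℂ] ℂ) := ((compL ℂ ↥Cid ↥J ℂ).flip P).comp D with hD'def
  have hD'app : ∀ (a : A) (x : ↥Cid), D' a x = D a (P x) := fun a x => rfl
  have hrC : ∀ (a : A) (x : ↥Cid),
      (idealBimod Cid hCL hCR).r a x = ⟨(x : A) * a, hCR a x x.2⟩ := fun a x => rfl
  have hlC : ∀ (a : A) (x : ↥Cid),
      (idealBimod Cid hCL hCR).l a x = ⟨a * (x : A), hCL a x x.2⟩ := fun a x => rfl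
  have e1 : ∀ (a : A) (x : ↥Cid),
      P ((idealBimod Cid hCL hCR).r a x) = (idealBimod J hJL hJR).r a (P x) := by
    intro a x
    apply Subtype.ext
    rw [hrC, hPr]
    rfl
  have e2 : ∀ (a : A) (x : ↥Cid),
      P ((idealBimod Cid hCL hCR).l a x) = (idealBimod J hJL hJR).l a (P x) := by
    intro a x
    apply Subtype.ext
    rw [hlC, hPl]
    rfl
  have hder : IsDerivation (idealBimod Cid hCL hCR).dual D' := by
    intro a b
    ext x
    show D (a * b) (P x) = D b (P ((idealBimod Cid hCL hCR).r a x))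
        + D a (P ((idealBimod Cid hCL hCR).l b x))
    rw [e1, e2, hD a b]
    rfl
  obtain ⟨f, hf⟩ := hC D' hder
  refine ⟨f.comp ι, fun a => ?_⟩
  ext y
  have hPy : P (ι y) = y := by
    have : ι y = ⟨(y : A), hsub y y.2⟩ := rfl
    rw [this, hPid]
  have h1 : D a y = D' a (ι y) := by rw [hD'app, hPy]
  have h2 := congrArg (fun g => g (ι y)) (hf a)
  have hre : ι ((idealBimod J hJL hJR).r a y) = (idealBimod Cid hCL hCR).r a (ι y) :=
    Subtype.ext rfl
  have hle : ι ((idealBimod J hJL hJR).l a y) = (idealBimod Cid hCL hCR).l a (ι y) :=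
    Subtype.ext rfl
  calc D a y = D' a (ι y) := h1
    _ = f ((idealBimod Cid hCL hCR).r a (ι y)) - f ((idealBimod Cid hCL hCR).l a (ι y)) := by
        exact h2
    _ = f (ι ((idealBimod J hJL hJR).r a y)) - f (ι ((idealBimod J hJL hJR).l a y)) := by
        rw [hre, hle]
    _ = ((idealBimod J hJL hJR).dual.l a (f.comp ι)
          - (idealBimod J hJL hJR).dual.r a (f.comp ι)) y := rfl

theorem stmt_12
    {A : Type*} [NormedRing A] [NormedAlgebra ℂ A] [CompleteSpace A]
    (ι : Type*) (p : Filter ι) [p.NeBot] (e : ι → A)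
    (hb : ∃ C : ℝ, ∀ i, ‖e i‖ ≤ C)
    (hqc : ∀ a : A, Tendsto (fun i => a * e i - e i * a) p (𝓝 0))
    (Iid Kid Cid : Submodule ℂ A)
    (hIcl : IsClosed (Iid : Set A)) (hKcl : IsClosed (Kid : Set A))
    (hCcl : IsClosed (Cid : Set A))
    (hIL : ∀ a : A, ∀ x ∈ Iid, a * x ∈ Iid) (hIR : ∀ a : A, ∀ x ∈ Iid, x * a ∈ Iid)
    (hKL : ∀ a : A, ∀ x ∈ Kid, a * x ∈ Kid) (hKR : ∀ a : A, ∀ x ∈ Kid, x * a ∈ Kid)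
    (hCL : ∀ a : A, ∀ x ∈ Cid, a * x ∈ Cid) (hCR : ∀ a : A, ∀ x ∈ Cid, x * a ∈ Cid)
    (hIset : (Iid : Set A) = {a : A | Tendsto (fun i => a * e i) p (𝓝 a)})
    (hKset : (Kid : Set A) = {a : A | Tendsto (fun i => a * e i) p (𝓝 0)})
    (hCset : (Cid : Set A) = {a : A | ∃ x : A, Tendsto (fun i => a * e i) p (𝓝 x)})
    -- $L(a_α) = I(a_α)$
    (hLI : {x : A | ∃ a : A, Tendsto (fun i => a * e i) p (𝓝 x)} = (Iid : Set A))
    (hC : ∀ D : A →L[ℂ] (↥Cid →L[ℂ] ℂ),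
        IsDerivation (idealBimod Cid hCL hCR).dual D → IsInner (idealBimod Cid hCL hCR).dual D) :
    (∀ D : A →L[ℂ] (↥Iid →L[ℂ] ℂ),
        IsDerivation (idealBimod Iid hIL hIR).dual D → IsInner (idealBimod Iid hIL hIR).dual D) ∧
    (∀ D : A →L[ℂ] (↥Kid →L[ℂ] ℂ),
        IsDerivation (idealBimod Kid hKL hKR).dual D → IsInner (idealBimod Kid hKL hKR).dual D) := by
  classical
  obtain ⟨Cb, hCb⟩ := hb
  -- the limit function on Cid
  have hex : ∀ x : ↥Cid, ∃ y : A, Tendsto (fun i => (x : A) * e i) p (𝓝 y) := by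
    intro x
    have hx := x.2
    rw [← SetLike.mem_coe, hCset] at hx
    exact hx
  choose Pf hPf using hex
  have huniq : ∀ (x : ↥Cid) (y : A),
      Tendsto (fun i => (x : A) * e i) p (𝓝 y) → Pf x = y :=
    fun x y h => tendsto_nhds_unique (hPf x) h
  have hItend : ∀ a ∈ Iid, Tendsto (fun i => a * e i) p (𝓝 a) := by
    intro a ha
    rw [← SetLike.mem_coe, hIset] at ha
    exact ha
  have hKtend : ∀ a ∈ Kid, Tendsto (fun i => a * e i) p (𝓝 0) := by
    intro a ha
    rw [← SetLike.mem_coe, hKset] at ha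
    exact ha
  have hPmemI : ∀ x : ↥Cid, Pf x ∈ Iid := by
    intro x
    have : Pf x ∈ {y : A | ∃ a : A, Tendsto (fun i => a * e i) p (𝓝 y)} := ⟨x, hPf x⟩
    rw [hLI, SetLike.mem_coe] at this
    exact this
  have hIsub : ∀ x ∈ Iid, x ∈ Cid := by
    intro x hx
    rw [← SetLike.mem_coe, hCset]
    exact ⟨x, hItend x hx⟩
  have hKsub : ∀ x ∈ Kid, x ∈ Cid := by
    intro x hx
    rw [← SetLike.mem_coe, hCset]
    exact ⟨0, hKtend x hx⟩
  have hadd : ∀ x y : ↥Cid, Pf (x + y) = Pf x + Pf y := by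
    intro x y
    apply huniq
    have := (hPf x).add (hPf y)
    simpa [add_mul] using this
  have hsmul : ∀ (c : ℂ) (x : ↥Cid), Pf (c • x) = c • Pf x := by
    intro c x
    apply huniq
    have := (hPf x).const_smul c
    simpa [smul_mul_assoc] using this
  have hPl' : ∀ (a : A) (x : ↥Cid) (hm : a * (x : A) ∈ Cid),
      Pf ⟨a * (x : A), hm⟩ = a * Pf x := by
    intro a x hm
    apply huniq
    have := (hPf x).const_mul a
    simpa [mul_assoc] using this
  have hPr' : ∀ (a : A) (x : ↥Cid) (hm : (x : A) * a ∈ Cid),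
      Pf ⟨(x : A) * a, hm⟩ = Pf x * a := by
    intro a x hm
    apply huniq
    have h1 : Tendsto (fun i => ((x : A) * e i) * a) p (𝓝 (Pf x * a)) := (hPf x).mul_const a
    have h2 : Tendsto (fun i => (x : A) * (a * e i - e i * a)) p (𝓝 0) := by
      simpa using (hqc a).const_mul (x : A)
    have h3 := h1.add h2
    rw [add_zero] at h3
    have heq : (fun i => ((x : A) * a) * e i)
        = fun i => ((x : A) * e i) * a + (x : A) * (a * e i - e i * a) := by
      funext i; noncomm_ring
    rw [Subtype.coe_mk, heq]
    exact h3
  have hPK : ∀ x : ↥Cid, (x : A) - Pf x ∈ Kid := by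
    intro x
    rw [← SetLike.mem_coe, hKset]
    show Tendsto (fun i => ((x : A) - Pf x) * e i) p (𝓝 0)
    have := (hPf x).sub (hItend (Pf x) (hPmemI x))
    simpa [sub_mul] using this
  have hPfI : ∀ (y : A) (hy : y ∈ Iid) (hm : y ∈ Cid), Pf ⟨y, hm⟩ = y :=
    fun y hy hm => huniq _ _ (hItend y hy)
  have hPfK : ∀ (y : A) (hy : y ∈ Kid) (hm : y ∈ Cid), Pf ⟨y, hm⟩ = 0 :=
    fun y hy hm => huniq _ _ (hKtend y hy)
  have hbound : ∀ x : ↥Cid, ‖Pf x‖ ≤ max Cb 0 * ‖x‖ := by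
    intro x
    have hn : Tendsto (fun i => ‖(x : A) * e i‖) p (𝓝 ‖Pf x‖) := (hPf x).norm
    have hle : ∀ i, ‖(x : A) * e i‖ ≤ max Cb 0 * ‖x‖ := by
      intro i
      calc ‖(x : A) * e i‖ ≤ ‖(x : A)‖ * ‖e i‖ := norm_mul_le _ _
        _ ≤ ‖(x : A)‖ * max Cb 0 :=
            mul_le_mul_of_nonneg_left ((hCb i).trans (le_max_left _ _)) (norm_nonneg _)
        _ = max Cb 0 * ‖x‖ := mul_comm _ _
    exact le_of_tendsto hn (Eventually.of_forall hle)
  -- the projections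
  set PI : ↥Cid →L[ℂ] ↥Iid :=
    LinearMap.mkContinuous
      { toFun := fun x => (⟨Pf x, hPmemI x⟩ : ↥Iid)
        map_add' := fun x y => Subtype.ext (hadd x y)
        map_smul' := fun c x => Subtype.ext (hsmul c x) }
      (max Cb 0) (fun x => hbound x) with hPIdef
  have hPIapp : ∀ x : ↥Cid, ((PI x : ↥Iid) : A) = Pf x := fun x => rfl
  set PK : ↥Cid →L[ℂ] ↥Kid :=
    LinearMap.mkContinuous
      { toFun := fun x => (⟨(x : A) - Pf x, hPK x⟩ : ↥Kid)
        map_add' := fun x y => Subtype.ext (by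
          simp only [Submodule.coe_add, hadd]
          abel)
        map_smul' := fun c x => Subtype.ext (by
          simp only [Submodule.coe_smul, hsmul, RingHom.id_apply, smul_sub]) }
      (1 + max Cb 0) (fun x => by
        have : ‖(x : A) - Pf x‖ ≤ ‖(x : A)‖ + ‖Pf x‖ := norm_sub_le _ _
        calc ‖(⟨(x : A) - Pf x, hPK x⟩ : ↥Kid)‖ = ‖(x : A) - Pf x‖ := rfl
          _ ≤ ‖(x : A)‖ + ‖Pf x‖ := norm_sub_le _ _
          _ ≤ ‖x‖ + max Cb 0 * ‖x‖ := add_le_add le_rfl (hbound x)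
          _ = (1 + max Cb 0) * ‖x‖ := by ring) with hPKdef
  have hPKapp : ∀ x : ↥Cid, ((PK x : ↥Kid) : A) = (x : A) - Pf x := fun x => rfl
  constructor
  · refine transfer_inner Cid Iid hCL hCR hIL hIR hIsub PI ?_ ?_ ?_ hC
    · intro a x hm
      rw [hPIapp, hPIapp, hPl']
    · intro a x hm
      rw [hPIapp, hPIapp, hPr']
    · intro y
      exact Subtype.ext (hPfI (y : A) y.2 _)
  · refine transfer_inner Cid Kid hCL hCR hKL hKR hKsub PK ?_ ?_ ?_ hC
    · intro a x hm
      rw [hPKapp, hPKapp, Subtype.coe_mk, hPl', mul_sub]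
    · intro a x hm
      rw [hPKapp, hPKapp, Subtype.coe_mk, hPr', sub_mul]
    · intro y
      refine Subtype.ext ?_
      show ((y : A)) - Pf ⟨(y : A), hKsub y y.2⟩ = (y : A)
      rw [hPfK (y : A) y.2, sub_zero]

end Paper
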